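/- Let H be a Hopf algebra with character δ and twisted antipode S_δ. Then S_δ² = Id if and only if Σ S_δ(h₍₂₎) h₍₁₎ = δ(h)·1 for all h ∈ H. -/

import Mathlib

open TensorProduct Coalgebra LinearMap

variable {H : Type*} [Semiring H] [HopfAlgebra ℂ H]

/-- The twisted antipode `S_δ(h) = ∑ δ(h₍₁₎) S(h₍₂₎)` associated to a character `δ`. -/
noncomputable def twistedAntipode (δ : H →ₐ[ℂ] ℂ) : H →ₗ[ℂ] H :=
  LinearMap.mul' ℂ H ∘ₗ
    TensorProduct.map (Algebra.linearMap ℂ H ∘ₗ δ.toLinearMap)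
      (HopfAlgebra.antipode (R := ℂ)) ∘ₗ
    Coalgebra.comul

namespace TwistedAux


local notation "S" => HopfAlgebra.antipode (R := ℂ) (A := H)
local notation "ε" => Coalgebra.counit (R := ℂ) (A := H)

lemma sum_counit_smul_right {a : H} {ι : Type*} (r : Coalgebra.Repr ℂ a ι) :
    ∑ i ∈ r.index, Coalgebra.counit (R := ℂ) (r.right i) • r.left i = a := by
  have h := Coalgebra.sum_tmul_counit_eq (R := ℂ) r
  have h2 := congrArg (TensorProduct.rid ℂ H) h
  simp only [map_sum, TensorProduct.rid_tmul, one_smul] at h2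
  exact h2

lemma sum_counit_smul_left {a : H} {ι : Type*} (r : Coalgebra.Repr ℂ a ι) :
    ∑ i ∈ r.index, Coalgebra.counit (R := ℂ) (r.left i) • r.right i = a := by
  have h := Coalgebra.sum_counit_tmul_eq (R := ℂ) r
  have h2 := congrArg (TensorProduct.lid ℂ H) h
  simp only [map_sum, TensorProduct.lid_tmul, one_smul] at h2
  exact h2

lemma sum_smul_apply {ι : Type*} (s : Finset ι) (c : ι → ℂ) (x : ι → H) (L : H →ₗ[ℂ] H) :
    ∑ i ∈ s, c i • L (x i) = L (∑ i ∈ s, c i • x i) := by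
  rw [map_sum]
  exact Finset.sum_congr rfl fun i _ => (map_smul L _ _).symm

noncomputable def reprMul {x y : H} {ι κ : Type*} (r1 : Coalgebra.Repr ℂ x ι) (r2 : Coalgebra.Repr ℂ y κ) :
    Coalgebra.Repr ℂ (x * y) (ι × κ) where
  index := r1.index ×ˢ r2.index
  left := fun p => r1.left p.1 * r2.left p.2
  right := fun p => r1.right p.1 * r2.right p.2
  eq := by
    rw [Bialgebra.comul_mul, ← r1.eq, ← r2.eq, Finset.sum_mul_sum, ← Finset.sum_product']
    exact Finset.sum_congr rfl fun p _ => (Algebra.TensorProduct.tmul_mul_tmul _ _ _ _).symm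

@[simp] lemma reprMul_index {x y : H} {ι κ : Type*} (r1 : Coalgebra.Repr ℂ x ι) (r2 : Coalgebra.Repr ℂ y κ) :
    (reprMul r1 r2).index = r1.index ×ˢ r2.index := rfl

@[simp] lemma reprMul_left {x y : H} {ι κ : Type*} (r1 : Coalgebra.Repr ℂ x ι) (r2 : Coalgebra.Repr ℂ y κ) :
    (reprMul r1 r2).left = fun p => r1.left p.1 * r2.left p.2 := rfl

@[simp] lemma reprMul_right {x y : H} {ι κ : Type*} (r1 : Coalgebra.Repr ℂ x ι) (r2 : Coalgebra.Repr ℂ y κ) :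
    (reprMul r1 r2).right = fun p => r1.right p.1 * r2.right p.2 := rfl

noncomputable def Phi : (H ⊗[ℂ] (H ⊗[ℂ] H)) ⊗[ℂ] (H ⊗[ℂ] (H ⊗[ℂ] H)) →ₗ[ℂ] H :=
  LinearMap.mul' ℂ H ∘ₗ
    TensorProduct.map (S ∘ₗ LinearMap.mul' ℂ H)
      (LinearMap.mul' ℂ H ∘ₗ
        TensorProduct.map (LinearMap.mul' ℂ H)
          (LinearMap.mul' ℂ H ∘ₗ (TensorProduct.comm ℂ H H).toLinearMap ∘ₗ
            TensorProduct.map S S) ∘ₗ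
        (TensorProduct.tensorTensorTensorComm ℂ H H H H).toLinearMap) ∘ₗ
    (TensorProduct.tensorTensorTensorComm ℂ H (H ⊗[ℂ] H) H (H ⊗[ℂ] H)).toLinearMap

lemma Phi_tmul (x y z p q r : H) :
    Phi ((x ⊗ₜ[ℂ] (y ⊗ₜ[ℂ] z)) ⊗ₜ[ℂ] (p ⊗ₜ[ℂ] (q ⊗ₜ[ℂ] r))) =
      S (x * p) * ((y * q) * (S r * S z)) := by
  simp [Phi]

lemma antipode_mul (a b : H) : S (a * b) = S b * S a := by
  have ra : Coalgebra.Repr ℂ a (H × H) := Coalgebra.Repr.arbitrary ℂ a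
  have ral : ∀ i, Coalgebra.Repr ℂ (ra.left i) (H × H) := fun i => Coalgebra.Repr.arbitrary ℂ _
  have rar : ∀ i, Coalgebra.Repr ℂ (ra.right i) (H × H) := fun i => Coalgebra.Repr.arbitrary ℂ _
  have rb : Coalgebra.Repr ℂ b (H × H) := Coalgebra.Repr.arbitrary ℂ b
  have rbl : ∀ j, Coalgebra.Repr ℂ (rb.left j) (H × H) := fun j => Coalgebra.Repr.arbitrary ℂ _
  have rbr : ∀ j, Coalgebra.Repr ℂ (rb.right j) (H × H) := fun j => Coalgebra.Repr.arbitrary ℂ _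
  have eqa := Coalgebra.sum_tmul_tmul_eq (R := ℂ) ra ral rar
  have eqb := Coalgebra.sum_tmul_tmul_eq (R := ℂ) rb rbl rbr
  have key := congrArg Phi (congrArg₂ (· ⊗ₜ[ℂ] ·) eqa eqb)
  simp only [TensorProduct.sum_tmul, TensorProduct.tmul_sum, map_sum, Phi_tmul] at key
  -- `key` :
  -- ∑ j ∈ rb.index, ∑ l ∈ (rbl j).index, ∑ i ∈ ra.index, ∑ k ∈ (ral i).index,
  --     S ((ral i).left k * (rbl j).left l) *
  --       ((ral i).right k * (rbl j).right l * (S (rb.right j) * S (ra.right i)))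
  --   = ∑ j ∈ rb.index, ∑ l ∈ (rbr j).index, ∑ i ∈ ra.index, ∑ k ∈ (rar i).index,
  --     S (ra.left i * rb.left j) *
  --       ((rar i).left k * (rbr j).left l * (S ((rbr j).right l) * S ((rar i).right k)))
  have claim1 : ∑ j ∈ rb.index, ∑ l ∈ (rbr j).index, ∑ i ∈ ra.index, ∑ k ∈ (rar i).index,
      S (ra.left i * rb.left j) *
        ((rar i).left k * (rbr j).left l * (S ((rbr j).right l) * S ((rar i).right k)))
      = S (a * b) := by
    calc
      ∑ j ∈ rb.index, ∑ l ∈ (rbr j).index, ∑ i ∈ ra.index, ∑ k ∈ (rar i).index,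
          S (ra.left i * rb.left j) *
            ((rar i).left k * (rbr j).left l * (S ((rbr j).right l) * S ((rar i).right k)))
          = ∑ j ∈ rb.index, ∑ i ∈ ra.index, ∑ k ∈ (rar i).index, ∑ l ∈ (rbr j).index,
          S (ra.left i * rb.left j) *
            ((rar i).left k * (rbr j).left l * (S ((rbr j).right l) * S ((rar i).right k))) := by
            refine Finset.sum_congr rfl fun j _ => ?_
            rw [Finset.sum_comm]
            exact Finset.sum_congr rfl fun i _ => Finset.sum_comm
      _ = ∑ j ∈ rb.index, ∑ i ∈ ra.index, ∑ k ∈ (rar i).index,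
            ε (rb.right j) •
              (S (ra.left i * rb.left j) * ((rar i).left k * S ((rar i).right k))) := by
            refine Finset.sum_congr rfl fun j _ => Finset.sum_congr rfl fun i _ =>
              Finset.sum_congr rfl fun k _ => ?_
            calc
              ∑ l ∈ (rbr j).index, S (ra.left i * rb.left j) *
                  ((rar i).left k * (rbr j).left l * (S ((rbr j).right l) * S ((rar i).right k)))
                  = S (ra.left i * rb.left j) * ((rar i).left k *
                      ((∑ l ∈ (rbr j).index, (rbr j).left l * S ((rbr j).right l)) *
                        S ((rar i).right k))) := by
                    simp only [Finset.mul_sum, Finset.sum_mul, mul_assoc]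
              _ = _ := by
                    rw [HopfAlgebra.sum_mul_antipode_eq_algebraMap_counit (R := ℂ) (rbr j), ← Algebra.smul_def,
                      mul_smul_comm, mul_smul_comm]
      _ = ∑ j ∈ rb.index, ∑ i ∈ ra.index,
            ε (rb.right j) • (ε (ra.right i) • S (ra.left i * rb.left j)) := by
            refine Finset.sum_congr rfl fun j _ => Finset.sum_congr rfl fun i _ => ?_
            rw [← Finset.smul_sum, ← Finset.mul_sum,
              HopfAlgebra.sum_mul_antipode_eq_algebraMap_counit (R := ℂ) (rar i), ← Algebra.commutes,
              ← Algebra.smul_def]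
      _ = ∑ j ∈ rb.index, ε (rb.right j) • S (a * rb.left j) := by
            refine Finset.sum_congr rfl fun j _ => ?_
            rw [← Finset.smul_sum]
            congr 1
            have h2 := sum_smul_apply ra.index (fun i => ε (ra.right i)) ra.left
              (S ∘ₗ LinearMap.mulRight ℂ (rb.left j))
            simp only [LinearMap.comp_apply, LinearMap.mulRight_apply] at h2
            rw [h2, sum_counit_smul_right ra]
      _ = S (a * b) := by
            have h2 := sum_smul_apply rb.index (fun j => ε (rb.right j)) rb.left
              (S ∘ₗ LinearMap.mulLeft ℂ a)
            simp only [LinearMap.comp_apply, LinearMap.mulLeft_apply] at h2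
            rw [h2, sum_counit_smul_right rb]
  have claim2 : ∑ j ∈ rb.index, ∑ l ∈ (rbl j).index, ∑ i ∈ ra.index, ∑ k ∈ (ral i).index,
      S ((ral i).left k * (rbl j).left l) *
        ((ral i).right k * (rbl j).right l * (S (rb.right j) * S (ra.right i)))
      = S b * S a := by
    calc
      ∑ j ∈ rb.index, ∑ l ∈ (rbl j).index, ∑ i ∈ ra.index, ∑ k ∈ (ral i).index,
          S ((ral i).left k * (rbl j).left l) *
            ((ral i).right k * (rbl j).right l * (S (rb.right j) * S (ra.right i)))
          = ∑ j ∈ rb.index, ∑ i ∈ ra.index, ∑ k ∈ (ral i).index, ∑ l ∈ (rbl j).index,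
          S ((ral i).left k * (rbl j).left l) *
            ((ral i).right k * (rbl j).right l * (S (rb.right j) * S (ra.right i))) := by
            refine Finset.sum_congr rfl fun j _ => ?_
            rw [Finset.sum_comm]
            exact Finset.sum_congr rfl fun i _ => Finset.sum_comm
      _ = ∑ j ∈ rb.index, ∑ i ∈ ra.index,
            (ε (ra.left i) * ε (rb.left j)) • (S (rb.right j) * S (ra.right i)) := by
            refine Finset.sum_congr rfl fun j _ => Finset.sum_congr rfl fun i _ => ?_
            have hcol := HopfAlgebra.sum_antipode_mul_eq_algebraMap_counit (R := ℂ) (reprMul (ral i) (rbl j))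
            have hcol2 : ∑ k ∈ (ral i).index, ∑ l ∈ (rbl j).index,
                S ((ral i).left k * (rbl j).left l) * ((ral i).right k * (rbl j).right l)
                = algebraMap ℂ H (ε (ra.left i * rb.left j)) := by
              rw [← Finset.sum_product' (ral i).index (rbl j).index (fun k l =>
                S ((ral i).left k * (rbl j).left l) * ((ral i).right k * (rbl j).right l))]
              exact hcol
            calc
              ∑ k ∈ (ral i).index, ∑ l ∈ (rbl j).index,
                  S ((ral i).left k * (rbl j).left l) *
                    ((ral i).right k * (rbl j).right l * (S (rb.right j) * S (ra.right i)))
                  = (∑ k ∈ (ral i).index, ∑ l ∈ (rbl j).index,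
                      S ((ral i).left k * (rbl j).left l) *
                        ((ral i).right k * (rbl j).right l)) *
                      (S (rb.right j) * S (ra.right i)) := by
                    simp only [Finset.mul_sum, Finset.sum_mul, mul_assoc]
              _ = _ := by
                    rw [hcol2, Bialgebra.counit_mul, ← Algebra.smul_def]
      _ = ∑ j ∈ rb.index,
            ε (rb.left j) • (S (rb.right j) * S a) := by
            refine Finset.sum_congr rfl fun j _ => ?_
            have h2 := sum_smul_apply ra.index (fun i => ε (ra.left i)) ra.right
              (LinearMap.mulLeft ℂ (S (rb.right j)) ∘ₗ S)
            simp only [LinearMap.comp_apply, LinearMap.mulLeft_apply] at h2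
            calc
              ∑ i ∈ ra.index, (ε (ra.left i) * ε (rb.left j)) •
                  (S (rb.right j) * S (ra.right i))
                  = ε (rb.left j) • ∑ i ∈ ra.index,
                      ε (ra.left i) • (S (rb.right j) * S (ra.right i)) := by
                    rw [Finset.smul_sum]
                    refine Finset.sum_congr rfl fun i _ => ?_
                    rw [← smul_smul, smul_comm]
              _ = _ := by rw [h2, sum_counit_smul_left ra]
      _ = S b * S a := by
            have h2 := sum_smul_apply rb.index (fun j => ε (rb.left j)) rb.right
              (LinearMap.mulRight ℂ (S a) ∘ₗ S)
            simp only [LinearMap.comp_apply, LinearMap.mulRight_apply] at h2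
            rw [h2, sum_counit_smul_left rb]
  rw [← claim1, ← key, claim2]


/-- Convolution product of linear endomorphisms. -/
noncomputable def conv (f g : H →ₗ[ℂ] H) : H →ₗ[ℂ] H :=
  LinearMap.mul' ℂ H ∘ₗ TensorProduct.map f g ∘ₗ Coalgebra.comul

lemma conv_apply (f g : H →ₗ[ℂ] H) {a : H} {ι : Type*} (r : Coalgebra.Repr ℂ a ι) :
    conv f g a = ∑ i ∈ r.index, f (r.left i) * g (r.right i) := by
  simp only [conv, LinearMap.comp_apply, ← r.eq, map_sum, TensorProduct.map_tmul,
    LinearMap.mul'_apply]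

lemma conv_apply' (f g : H →ₗ[ℂ] H) (a : H) :
    conv f g a = ∑ i ∈ (Coalgebra.Repr.arbitrary ℂ a).index,
      f ((Coalgebra.Repr.arbitrary ℂ a).left i) * g ((Coalgebra.Repr.arbitrary ℂ a).right i) :=
  conv_apply f g _

lemma conv_assoc (f g h : H →ₗ[ℂ] H) : conv (conv f g) h = conv f (conv g h) := by
  refine LinearMap.ext fun a => ?_
  have key := Coalgebra.sum_tmul_tmul_eq (R := ℂ) (Coalgebra.Repr.arbitrary ℂ a)
    (fun i => Coalgebra.Repr.arbitrary ℂ _) (fun i => Coalgebra.Repr.arbitrary ℂ _)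
  have key2 := congrArg
    (LinearMap.mul' ℂ H ∘ₗ TensorProduct.map f (LinearMap.mul' ℂ H ∘ₗ TensorProduct.map g h)) key
  simp only [map_sum, LinearMap.comp_apply, TensorProduct.map_tmul, LinearMap.mul'_apply] at key2
  simp only [conv_apply', Finset.sum_mul, Finset.mul_sum, mul_assoc]
  exact key2

/-- unit of convolution -/
noncomputable def uCounit : H →ₗ[ℂ] H :=
  Algebra.linearMap ℂ H ∘ₗ Coalgebra.counit

lemma conv_counit_right (f : H →ₗ[ℂ] H) : conv f uCounit = f := by
  refine LinearMap.ext fun a => ?_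
  set r := Coalgebra.Repr.arbitrary ℂ a with hr
  rw [conv_apply f _ r]
  have : ∀ i ∈ r.index, f (r.left i) * uCounit (r.right i)
      = f (Coalgebra.counit (R := ℂ) (r.right i) • r.left i) := by
    intro i _
    simp only [uCounit, LinearMap.comp_apply, Algebra.linearMap_apply, map_smul]
    rw [← Algebra.commutes, ← Algebra.smul_def]
  rw [Finset.sum_congr rfl this, ← map_sum, sum_counit_smul_right r]

lemma conv_counit_left (f : H →ₗ[ℂ] H) : conv uCounit f = f := by
  refine LinearMap.ext fun a => ?_
  set r := Coalgebra.Repr.arbitrary ℂ a with hr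
  rw [conv_apply _ f r]
  have : ∀ i ∈ r.index, uCounit (r.left i) * f (r.right i)
      = f (Coalgebra.counit (R := ℂ) (r.left i) • r.right i) := by
    intro i _
    simp only [uCounit, LinearMap.comp_apply, Algebra.linearMap_apply, map_smul]
    rw [← Algebra.smul_def]
  rw [Finset.sum_congr rfl this, ← map_sum, sum_counit_smul_left r]

lemma conv_antipode_id :
    conv (HopfAlgebra.antipode (R := ℂ)) LinearMap.id = (uCounit : H →ₗ[ℂ] H) := by
  have := HopfAlgebra.mul_antipode_rTensor_comul (R := ℂ) (A := H)
  rw [conv, uCounit, ← this, LinearMap.rTensor]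

lemma conv_id_antipode :
    conv LinearMap.id (HopfAlgebra.antipode (R := ℂ)) = (uCounit : H →ₗ[ℂ] H) := by
  have := HopfAlgebra.mul_antipode_lTensor_comul (R := ℂ) (A := H)
  rw [conv, uCounit, ← this, LinearMap.lTensor]

lemma antipode_one : HopfAlgebra.antipode (R := ℂ) (1 : H) = 1 := by
  have h := HopfAlgebra.mul_antipode_rTensor_comul_apply (R := ℂ) (A := H) (1 : H)
  simpa [Algebra.TensorProduct.one_def] using h

section TA

variable (δ : H →ₐ[ℂ] ℂ)

lemma twistedAntipode_eq_conv :
    twistedAntipode δ = conv (Algebra.linearMap ℂ H ∘ₗ δ.toLinearMap) S := rfl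

lemma tA_apply {a : H} {ι : Type*} (r : Coalgebra.Repr ℂ a ι) :
    twistedAntipode δ a = ∑ i ∈ r.index, δ (r.left i) • S (r.right i) := by
  rw [twistedAntipode_eq_conv, conv_apply _ _ r]
  exact Finset.sum_congr rfl fun i _ => by
    rw [LinearMap.comp_apply, Algebra.linearMap_apply, AlgHom.toLinearMap_apply,
      ← Algebra.smul_def]

lemma tA_one : twistedAntipode δ (1 : H) = 1 := by
  simp [twistedAntipode, Algebra.TensorProduct.one_def, antipode_one]

lemma tA_mul (a b : H) :
    twistedAntipode δ (a * b) = twistedAntipode δ b * twistedAntipode δ a := by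
  have ra : Coalgebra.Repr ℂ a (H × H) := Coalgebra.Repr.arbitrary ℂ a
  have rb : Coalgebra.Repr ℂ b (H × H) := Coalgebra.Repr.arbitrary ℂ b
  have h1 : twistedAntipode δ (a * b) = ∑ i ∈ ra.index, ∑ j ∈ rb.index,
      δ (ra.left i * rb.left j) • S (ra.right i * rb.right j) := by
    rw [← Finset.sum_product' ra.index rb.index (fun i j =>
      δ (ra.left i * rb.left j) • S (ra.right i * rb.right j))]
    exact tA_apply δ (reprMul ra rb)
  rw [h1, tA_apply δ ra, tA_apply δ rb, Finset.sum_mul_sum, Finset.sum_comm]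
  refine Finset.sum_congr rfl fun i _ => Finset.sum_congr rfl fun j _ => ?_
  rw [map_mul, antipode_mul, smul_mul_smul_comm, mul_comm (δ (rb.left i)) (δ (ra.left j))]

lemma tA_comp_u :
    twistedAntipode δ ∘ₗ (Algebra.linearMap ℂ H ∘ₗ δ.toLinearMap)
      = Algebra.linearMap ℂ H ∘ₗ δ.toLinearMap := by
  refine LinearMap.ext fun a => ?_
  simp only [LinearMap.comp_apply, Algebra.linearMap_apply, AlgHom.toLinearMap_apply,
    Algebra.algebraMap_eq_smul_one, map_smul, tA_one]

lemma conv_uS_u :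
    conv (Algebra.linearMap ℂ H ∘ₗ δ.toLinearMap ∘ₗ S) (Algebra.linearMap ℂ H ∘ₗ δ.toLinearMap)
      = (uCounit : H →ₗ[ℂ] H) := by
  refine LinearMap.ext fun a => ?_
  set r := Coalgebra.Repr.arbitrary ℂ a with hr
  rw [conv_apply _ _ r]
  have : ∀ i ∈ r.index,
      (Algebra.linearMap ℂ H ∘ₗ δ.toLinearMap ∘ₗ S) (r.left i) *
        (Algebra.linearMap ℂ H ∘ₗ δ.toLinearMap) (r.right i)
      = algebraMap ℂ H (δ (S (r.left i) * r.right i)) := by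
    intro i _
    simp only [LinearMap.comp_apply, Algebra.linearMap_apply, AlgHom.toLinearMap_apply,
      map_mul]
  rw [Finset.sum_congr rfl this, ← map_sum, ← map_sum,
    HopfAlgebra.sum_antipode_mul_eq_algebraMap_counit (R := ℂ) r, AlgHom.commutes]
  simp [uCounit]

/-- The "opposite-side" convolution map `h ↦ ∑ S_δ(h₂) h₁`. -/
noncomputable def T : H →ₗ[ℂ] H :=
  LinearMap.mul' ℂ H ∘ₗ
    TensorProduct.map (twistedAntipode δ) LinearMap.id ∘ₗ
    (TensorProduct.comm ℂ H H).toLinearMap ∘ₗ Coalgebra.comul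

lemma T_apply {a : H} {ι : Type*} (r : Coalgebra.Repr ℂ a ι) :
    T δ a = ∑ i ∈ r.index, twistedAntipode δ (r.right i) * r.left i := by
  simp only [T, LinearMap.comp_apply, ← r.eq, map_sum, LinearEquiv.coe_coe,
    TensorProduct.comm_tmul, TensorProduct.map_tmul, LinearMap.mul'_apply,
    LinearMap.id_coe, id_eq]

lemma e_key :
    conv (twistedAntipode δ) (twistedAntipode δ ∘ₗ twistedAntipode δ)
      = twistedAntipode δ ∘ₗ T δ := by
  refine LinearMap.ext fun a => ?_
  set r := Coalgebra.Repr.arbitrary ℂ a with hr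
  rw [conv_apply _ _ r, LinearMap.comp_apply, T_apply δ r, map_sum]
  exact Finset.sum_congr rfl fun i _ => (tA_mul δ _ _).symm

lemma e_one : conv (twistedAntipode δ) LinearMap.id
    = Algebra.linearMap ℂ H ∘ₗ δ.toLinearMap := by
  rw [twistedAntipode_eq_conv, conv_assoc, conv_antipode_id, conv_counit_right]

end TA

end TwistedAux

open TwistedAux in
/-- `S_δ² = Id` iff `∑ S_δ(h₍₂₎) h₍₁₎ = δ(h)·1` for all `h`. -/
theorem twistedAntipode_involutive_iff (δ : H →ₐ[ℂ] ℂ) :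
    twistedAntipode δ ∘ₗ twistedAntipode δ = LinearMap.id ↔
      LinearMap.mul' ℂ H ∘ₗ
          TensorProduct.map (twistedAntipode δ) LinearMap.id ∘ₗ
          (TensorProduct.comm ℂ H H).toLinearMap ∘ₗ Coalgebra.comul =
        Algebra.linearMap ℂ H ∘ₗ δ.toLinearMap := by
  have hT : (LinearMap.mul' ℂ H ∘ₗ
      TensorProduct.map (twistedAntipode δ) LinearMap.id ∘ₗ
      (TensorProduct.comm ℂ H H).toLinearMap ∘ₗ Coalgebra.comul) = T δ := rfl
  rw [hT]
  constructor
  · intro h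
    have h2 : twistedAntipode δ ∘ₗ T δ = Algebra.linearMap ℂ H ∘ₗ δ.toLinearMap := by
      rw [← e_key, h, e_one]
    calc T δ = (twistedAntipode δ ∘ₗ twistedAntipode δ) ∘ₗ T δ := by
          rw [h, LinearMap.id_comp]
      _ = twistedAntipode δ ∘ₗ (twistedAntipode δ ∘ₗ T δ) := by rw [LinearMap.comp_assoc]
      _ = Algebra.linearMap ℂ H ∘ₗ δ.toLinearMap := by rw [h2, tA_comp_u]
  · intro h
    have e2 : conv (twistedAntipode δ) (twistedAntipode δ ∘ₗ twistedAntipode δ)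
        = Algebra.linearMap ℂ H ∘ₗ δ.toLinearMap := by
      rw [e_key, h, tA_comp_u]
    set L : H →ₗ[ℂ] H :=
      conv LinearMap.id (Algebra.linearMap ℂ H ∘ₗ δ.toLinearMap ∘ₗ
        HopfAlgebra.antipode (R := ℂ)) with hLdef
    have hL : conv L (twistedAntipode δ) = uCounit := by
      rw [hLdef, twistedAntipode_eq_conv, conv_assoc, ← conv_assoc
        (Algebra.linearMap ℂ H ∘ₗ δ.toLinearMap ∘ₗ HopfAlgebra.antipode (R := ℂ)),
        conv_uS_u, conv_counit_left, conv_id_antipode]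
    calc twistedAntipode δ ∘ₗ twistedAntipode δ
        = conv uCounit (twistedAntipode δ ∘ₗ twistedAntipode δ) := by rw [conv_counit_left]
      _ = conv (conv L (twistedAntipode δ)) (twistedAntipode δ ∘ₗ twistedAntipode δ) := by
          rw [hL]
      _ = conv L (conv (twistedAntipode δ) (twistedAntipode δ ∘ₗ twistedAntipode δ)) := by
          rw [conv_assoc]
      _ = conv L (conv (twistedAntipode δ) LinearMap.id) := by rw [e2, e_one]
      _ = conv (conv L (twistedAntipode δ)) LinearMap.id := by rw [← conv_assoc]
      _ = conv uCounit LinearMap.id := by rw [hL]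
      _ = LinearMap.id := by rw [conv_counit_left]
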